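/- Let E be a real n×e matrix such that every column of E has exactly two nonzero entries, every row of E has exactly k_w nonzero entries, and for any two distinct rows of E there is at most one column index at which both rows have nonzero entries. Then every row of the n×n matrix E·Eᵀ has at most k_w + 1 nonzero entries; consequently the total number of nonzero entries of E·Eᵀ is at most n·(k_w + 1). -/

import Mathlib

open Matrix Finset

/-- if every column of `E` has exactly two nonzeros, every row exactly `k_w`
nonzeros, and any two distinct rows share at most one common nonzero column, then every row of
`E·Eᵀ` has at most `k_w + 1` nonzeros, and `nnz(E·Eᵀ) ≤ n·(k_w + 1)`. -/
theorem nnz_mul_transpose_le (n e k_w : ℕ) (E : Matrix (Fin n) (Fin e) ℝ)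
    (hcol : ∀ j : Fin e, (univ.filter fun i : Fin n => E i j ≠ 0).card = 2)
    (hrow : ∀ i : Fin n, (univ.filter fun j : Fin e => E i j ≠ 0).card = k_w)
    (hpair : ∀ i i' : Fin n, i ≠ i' →
      (univ.filter fun j : Fin e => E i j ≠ 0 ∧ E i' j ≠ 0).card ≤ 1) :
    (∀ i : Fin n, (univ.filter fun i' : Fin n => (E * Eᵀ) i i' ≠ 0).card ≤ k_w + 1) ∧
    (univ.filter fun q : Fin n × Fin n => (E * Eᵀ) q.1 q.2 ≠ 0).card ≤ n * (k_w + 1) := by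
  classical
  have key : ∀ i : Fin n, (univ.filter fun i' : Fin n => (E * Eᵀ) i i' ≠ 0).card ≤ k_w + 1 := by
    intro i
    set S : Finset (Fin n) := univ.filter fun i' : Fin n => (E * Eᵀ) i i' ≠ 0 with hS
    have hex : ∀ i' ∈ S.erase i, ∃ j : Fin e, E i j ≠ 0 ∧ E i' j ≠ 0 := by
      intro i' hi'
      have hmem := Finset.mem_of_mem_erase hi'
      rw [hS, Finset.mem_filter] at hmem
      have hne : (∑ j : Fin e, E i j * E i' j) ≠ 0 := by
        simpa [Matrix.mul_apply, Matrix.transpose_apply] using hmem.2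
      obtain ⟨j, _, hj⟩ := Finset.exists_ne_zero_of_sum_ne_zero hne
      exact ⟨j, left_ne_zero_of_mul hj, right_ne_zero_of_mul hj⟩
    have herase : (S.erase i).card ≤ k_w := by
      rcases (S.erase i).eq_empty_or_nonempty with hE | hNE
      · simp [hE]
      · obtain ⟨i0, hi0⟩ := hNE
        obtain ⟨j0, _⟩ := hex i0 hi0
        rw [← hrow i]
        set f : Fin n → Fin e := fun i' =>
          if h : i' ∈ S.erase i then Classical.choose (hex i' h) else j0 with hf
        apply Finset.card_le_card_of_injOn f
        · intro i' hi'
          rw [Finset.mem_coe] at hi'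
          have hspec := Classical.choose_spec (hex i' hi')
          simp only [hf, dif_pos hi', Finset.mem_coe, Finset.mem_filter, Finset.mem_univ, true_and]
          exact hspec.1
        · intro i₁ h₁ i₂ h₂ heq
          rw [Finset.mem_coe] at h₁ h₂
          simp only [hf, dif_pos h₁, dif_pos h₂] at heq
          obtain ⟨ha1, hb1⟩ := Classical.choose_spec (hex i₁ h₁)
          obtain ⟨ha2, hb2⟩ := Classical.choose_spec (hex i₂ h₂)
          set j := Classical.choose (hex i₁ h₁) with hj
          rw [← heq] at hb2
          have hi1 : i₁ ≠ i := Finset.ne_of_mem_erase h₁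
          have hi2 : i₂ ≠ i := Finset.ne_of_mem_erase h₂
          by_contra hne12
          have hsub : ({i, i₁, i₂} : Finset (Fin n)) ⊆
              univ.filter fun x : Fin n => E x j ≠ 0 := by
            intro x hx
            simp only [Finset.mem_insert, Finset.mem_singleton] at hx
            rcases hx with rfl | rfl | rfl <;>
              simp only [Finset.mem_filter, Finset.mem_univ, true_and] <;>
              assumption
          have hcard : ({i, i₁, i₂} : Finset (Fin n)).card = 3 := by
            rw [Finset.card_insert_of_notMem (by simp [Ne.symm hi1, Ne.symm hi2]),
              Finset.card_insert_of_notMem (by simp [hne12]), Finset.card_singleton]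
          have := Finset.card_le_card hsub
          rw [hcard, hcol j] at this
          omega
    have hsub2 : S ⊆ insert i (S.erase i) := by
      intro x hx
      by_cases h : x = i
      · simp [h]
      · exact Finset.mem_insert_of_mem (Finset.mem_erase.mpr ⟨h, hx⟩)
    calc S.card ≤ (insert i (S.erase i)).card := Finset.card_le_card hsub2
      _ ≤ (S.erase i).card + 1 := Finset.card_insert_le _ _
      _ ≤ k_w + 1 := by omega
  refine ⟨key, ?_⟩
  have hfib := Finset.card_eq_sum_card_fiberwise (f := fun q : Fin n × Fin n => q.1)
    (s := univ.filter fun q : Fin n × Fin n => (E * Eᵀ) q.1 q.2 ≠ 0) (t := univ)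
    (fun q _ => Finset.mem_univ _)
  rw [hfib]
  calc ∑ i : Fin n, ((univ.filter fun q : Fin n × Fin n => (E * Eᵀ) q.1 q.2 ≠ 0).filter
        fun q => q.1 = i).card
      ≤ ∑ _i : Fin n, (k_w + 1) := by
        apply Finset.sum_le_sum
        intro i _
        refine le_trans ?_ (key i)
        apply Finset.card_le_card_of_injOn (fun q => q.2)
        · intro q hq
          simp only [Finset.mem_coe, Finset.mem_filter, Finset.mem_univ, true_and] at hq ⊢
          obtain ⟨h, rfl⟩ := hq
          exact h
        · intro q₁ h₁ q₂ h₂ heq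
          rw [Finset.mem_coe] at h₁ h₂
          simp only [Finset.mem_filter] at h₁ h₂
          exact Prod.ext (h₁.2.trans h₂.2.symm) heq
      _ = n * (k_w + 1) := by
        rw [Finset.sum_const, Finset.card_univ, Fintype.card_fin, smul_eq_mul]
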